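/- The improper integral over the real line of the complex rational function x ↦ (4 + 12ix − 20x² − 12ix³)/((x−i)⁶(x+i)⁴) equals −15π/16. -/

import Mathlib

open Complex MeasureTheory Filter

noncomputable def gAux (x : ℝ) : ℂ :=
  -(1/4) * ((x : ℂ) - I)⁻¹ - (I/8) * (((x : ℂ) - I) ^ 4)⁻¹ - (11/16) * ((x : ℂ) + I)⁻¹
    - (7*I/16) * (((x : ℂ) + I) ^ 2)⁻¹ + (1/4) * (((x : ℂ) + I) ^ 3)⁻¹

lemma sub_I_ne (x : ℝ) : (x : ℂ) - I ≠ 0 := by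
  intro h
  have := congrArg Complex.im h
  simp at this

lemma add_I_ne (x : ℝ) : (x : ℂ) + I ≠ 0 := by
  intro h
  have := congrArg Complex.im h
  simp at this

lemma fAux_eq (x : ℝ) :
    ((4 + 12 * I * x - 20 * x ^ 2 - 12 * I * x ^ 3) / ((x - I) ^ 6 * (x + I) ^ 4) : ℂ)
      = (1/4) * (((x : ℂ) - I) ^ 2)⁻¹ + (I/2) * (((x : ℂ) - I) ^ 5)⁻¹
        + (11/16) * (((x : ℂ) + I) ^ 2)⁻¹ + (7*I/8) * (((x : ℂ) + I) ^ 3)⁻¹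
        - (3/4) * (((x : ℂ) + I) ^ 4)⁻¹
        - (15/16) * ((1 : ℂ) + (x : ℂ) ^ 2)⁻¹ := by
  have h1 := sub_I_ne x
  have h2 := add_I_ne x
  set a : ℂ := (x : ℂ) - I with ha
  set b : ℂ := (x : ℂ) + I with hb
  have hD : a ^ 6 * b ^ 4 ≠ 0 := mul_ne_zero (pow_ne_zero _ h1) (pow_ne_zero _ h2)
  have hab : (1 : ℂ) + (x : ℂ) ^ 2 = a * b := by rw [ha, hb]; linear_combination Complex.I_sq
  rw [hab, div_eq_iff hD]
  have m1 : (a ^ 2)⁻¹ * (a ^ 6 * b ^ 4) = a ^ 4 * b ^ 4 := by field_simp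
  have m2 : (a ^ 5)⁻¹ * (a ^ 6 * b ^ 4) = a * b ^ 4 := by field_simp
  have m3 : (b ^ 2)⁻¹ * (a ^ 6 * b ^ 4) = a ^ 6 * b ^ 2 := by field_simp
  have m4 : (b ^ 3)⁻¹ * (a ^ 6 * b ^ 4) = a ^ 6 * b := by field_simp
  have m5 : (b ^ 4)⁻¹ * (a ^ 6 * b ^ 4) = a ^ 6 := by field_simp
  have m6 : (a * b)⁻¹ * (a ^ 6 * b ^ 4) = a ^ 5 * b ^ 3 := by field_simp
  rw [ha, hb] at m1 m2 m3 m4 m5 m6 ⊢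
  linear_combination (-(1/4) : ℂ) * m1 - (I/2) * m2 - (11/16 : ℂ) * m3 - (7*I/8) * m4
    + (3/4 : ℂ) * m5 + (15/16 : ℂ) * m6
    + ((4:ℂ) + (-4)*I^2 + 4*I^4 + (-11/4)*I^6 + 12*(x:ℂ)*I + (-12)*(x:ℂ)*I^3 + 9*(x:ℂ)*I^5
      + (-20)*(x:ℂ)^2 + 20*(x:ℂ)^2*I^2 + (-31/4)*(x:ℂ)^2*I^4 + (-12)*(x:ℂ)^3*I
      + (-4)*(x:ℂ)^3*I^3 + (39/4)*(x:ℂ)^4*I^2 + (-5)*(x:ℂ)^5*I + (3/4)*(x:ℂ)^6) * Complex.I_sq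

lemma hasDerivAt_gAux (x : ℝ) :
    HasDerivAt gAux
      ((1/4) * (((x : ℂ) - I) ^ 2)⁻¹ + (I/2) * (((x : ℂ) - I) ^ 5)⁻¹
        + (11/16) * (((x : ℂ) + I) ^ 2)⁻¹ + (7*I/8) * (((x : ℂ) + I) ^ 3)⁻¹
        - (3/4) * (((x : ℂ) + I) ^ 4)⁻¹) x := by
  have h1 := sub_I_ne x
  have h2 := add_I_ne x
  have hu : HasDerivAt (fun z : ℂ => z - I) 1 (x : ℂ) := (hasDerivAt_id _).sub_const I
  have hv : HasDerivAt (fun z : ℂ => z + I) 1 (x : ℂ) := (hasDerivAt_id _).add_const I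
  have D1 : HasDerivAt (fun y : ℝ => ((y : ℂ) - I)⁻¹) (-((((x : ℂ) - I) ^ 2)⁻¹)) x := by
    have h := (hu.inv h1).comp_ofReal
    convert h using 1
    · rfl
    field_simp
  have D2 : HasDerivAt (fun y : ℝ => (((y : ℂ) - I) ^ 4)⁻¹) (-4 * (((x : ℂ) - I) ^ 5)⁻¹) x := by
    have h := ((hu.pow 4).inv (pow_ne_zero 4 h1)).comp_ofReal
    convert h using 1
    · rfl
    simp only [Pi.pow_apply]
    field_simp
    ring
  have D3 : HasDerivAt (fun y : ℝ => ((y : ℂ) + I)⁻¹) (-((((x : ℂ) + I) ^ 2)⁻¹)) x := by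
    have h := (hv.inv h2).comp_ofReal
    convert h using 1
    · rfl
    field_simp
  have D4 : HasDerivAt (fun y : ℝ => (((y : ℂ) + I) ^ 2)⁻¹) (-2 * (((x : ℂ) + I) ^ 3)⁻¹) x := by
    have h := ((hv.pow 2).inv (pow_ne_zero 2 h2)).comp_ofReal
    convert h using 1
    · rfl
    simp only [Pi.pow_apply]
    field_simp
    ring
  have D5 : HasDerivAt (fun y : ℝ => (((y : ℂ) + I) ^ 3)⁻¹) (-3 * (((x : ℂ) + I) ^ 4)⁻¹) x := by
    have h := ((hv.pow 3).inv (pow_ne_zero 3 h2)).comp_ofReal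
    convert h using 1
    · rfl
    simp only [Pi.pow_apply]
    field_simp
    ring
  have total := ((((D1.const_mul (-(1/4) : ℂ)).sub (D2.const_mul (I/8))).sub
    (D3.const_mul ((11:ℂ)/16))).sub (D4.const_mul (7*I/16))).add (D5.const_mul ((1:ℂ)/4))
  have heq : gAux = fun y : ℝ =>
      ((((-(1/4) * ((y : ℂ) - I)⁻¹) - (I/8) * (((y : ℂ) - I) ^ 4)⁻¹)
        - (11/16) * ((y : ℂ) + I)⁻¹) - (7*I/16) * (((y : ℂ) + I) ^ 2)⁻¹)
        + (1/4) * (((y : ℂ) + I) ^ 3)⁻¹ := by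
    funext y; simp only [gAux]
  rw [heq]
  exact total.congr_deriv (by ring)

lemma norm_sub_I_sq (x : ℝ) : ‖(x : ℂ) - I‖ ^ 2 = 1 + x ^ 2 := by
  rw [← Complex.normSq_eq_norm_sq]
  simp [Complex.normSq_apply]
  ring

lemma norm_add_I_sq (x : ℝ) : ‖(x : ℂ) + I‖ ^ 2 = 1 + x ^ 2 := by
  rw [← Complex.normSq_eq_norm_sq]
  simp [Complex.normSq_apply]
  ring

lemma integrable_pow_inv (c : ℂ) (k : ℕ) (hk : 2 ≤ k)
    (hc : ∀ x : ℝ, (x : ℂ) + c ≠ 0) (hn : ∀ x : ℝ, ‖(x : ℂ) + c‖ ^ 2 = 1 + x ^ 2) :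
    Integrable (fun x : ℝ => (((x : ℂ) + c) ^ k)⁻¹) := by
  have hcont : Continuous (fun x : ℝ => (((x : ℂ) + c) ^ k)⁻¹) := by
    apply Continuous.inv₀
    · exact (Complex.continuous_ofReal.add continuous_const).pow k
    · exact fun x => pow_ne_zero k (hc x)
  refine integrable_inv_one_add_sq.mono' hcont.aestronglyMeasurable ?_
  filter_upwards with x
  rw [norm_inv, norm_pow]
  have h1 : (1 : ℝ) ≤ ‖(x : ℂ) + c‖ := by
    nlinarith [hn x, sq_nonneg x, norm_nonneg ((x : ℂ) + c)]
  have h2 : 1 + x ^ 2 ≤ ‖(x : ℂ) + c‖ ^ k := by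
    calc 1 + x ^ 2 = ‖(x : ℂ) + c‖ ^ 2 := (hn x).symm
    _ ≤ ‖(x : ℂ) + c‖ ^ k := pow_le_pow_right₀ h1 hk
  rw [inv_le_inv₀ (by positivity) (by positivity)]
  exact h2

lemma tendsto_pow_inv_zero (c : ℂ) (k : ℕ) (hk : k ≠ 0)
    (hn : ∀ x : ℝ, ‖(x : ℂ) + c‖ ^ 2 = 1 + x ^ 2) (l : Filter ℝ)
    (hl : Tendsto (fun x : ℝ => |x|) l atTop) :
    Tendsto (fun x : ℝ => (((x : ℂ) + c) ^ k)⁻¹) l (nhds 0) := by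
  rw [tendsto_zero_iff_norm_tendsto_zero]
  have hnorm : Tendsto (fun x : ℝ => ‖(x : ℂ) + c‖) l atTop := by
    apply tendsto_atTop_mono _ hl
    intro x
    nlinarith [hn x, _root_.sq_abs x, norm_nonneg ((x : ℂ) + c), abs_nonneg x]
  have hpow : Tendsto (fun x : ℝ => ‖(x : ℂ) + c‖ ^ k) l atTop :=
    (tendsto_pow_atTop hk).comp hnorm
  simpa [norm_inv, norm_pow, Pi.inv_def] using hpow.inv_tendsto_atTop

theorem integral_case_a_II :
    ∫ x : ℝ, ((4 + 12 * I * x - 20 * x ^ 2 - 12 * I * x ^ 3) /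
      ((x - I) ^ 6 * (x + I) ^ 4) : ℂ) = -((15 : ℂ) / 16) * (Real.pi : ℂ) := by
  set D : ℝ → ℂ := fun x =>
      (1/4) * (((x : ℂ) - I) ^ 2)⁻¹ + (I/2) * (((x : ℂ) - I) ^ 5)⁻¹
        + (11/16) * (((x : ℂ) + I) ^ 2)⁻¹ + (7*I/8) * (((x : ℂ) + I) ^ 3)⁻¹
        - (3/4) * (((x : ℂ) + I) ^ 4)⁻¹ with hD
  have hsub : ∀ x : ℝ, (x : ℂ) + (-I) ≠ 0 := fun x => by
    simpa [sub_eq_add_neg] using sub_I_ne x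
  have hadd : ∀ x : ℝ, (x : ℂ) + I ≠ 0 := add_I_ne
  have hnsub : ∀ x : ℝ, ‖(x : ℂ) + (-I)‖ ^ 2 = 1 + x ^ 2 := fun x => by
    rw [← sub_eq_add_neg]; exact norm_sub_I_sq x
  have hnadd : ∀ x : ℝ, ‖(x : ℂ) + I‖ ^ 2 = 1 + x ^ 2 := norm_add_I_sq
  have hDi : Integrable D := by
    have i1 := (integrable_pow_inv (-I) 2 (by norm_num) hsub hnsub).const_mul ((1:ℂ)/4)
    have i2 := (integrable_pow_inv (-I) 5 (by norm_num) hsub hnsub).const_mul (I/2)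
    have i3 := (integrable_pow_inv I 2 (by norm_num) hadd hnadd).const_mul ((11:ℂ)/16)
    have i4 := (integrable_pow_inv I 3 (by norm_num) hadd hnadd).const_mul (7*I/8)
    have i5 := (integrable_pow_inv I 4 (by norm_num) hadd hnadd).const_mul ((3:ℂ)/4)
    have := ((((i1.add i2).add i3).add i4).sub i5)
    simpa [hD, sub_eq_add_neg, Pi.add_def, Pi.neg_def] using this
  have hDint : ∫ x : ℝ, D x = 0 := by
    have hderiv : ∀ x : ℝ, HasDerivAt gAux (D x) x := hasDerivAt_gAux
    have key : ∀ l : Filter ℝ, Tendsto (fun x : ℝ => |x|) l atTop →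
        Tendsto gAux l (nhds 0) := by
      intro l hl
      have t1 := tendsto_pow_inv_zero (-I) 1 one_ne_zero hnsub l hl
      have t2 := tendsto_pow_inv_zero (-I) 4 (by norm_num) hnsub l hl
      have t3 := tendsto_pow_inv_zero I 1 one_ne_zero hnadd l hl
      have t4 := tendsto_pow_inv_zero I 2 (by norm_num) hnadd l hl
      have t5 := tendsto_pow_inv_zero I 3 (by norm_num) hnadd l hl
      have big := ((((t1.const_mul (-(1:ℂ)/4)).sub (t2.const_mul (I/8))).sub
        (t3.const_mul ((11:ℂ)/16))).sub (t4.const_mul (7*I/16))).add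
        (t5.const_mul ((1:ℂ)/4))
      simp only [mul_zero, sub_zero, add_zero, zero_add, zero_sub, neg_zero] at big
      convert big using 2 with x
      simp [gAux, sub_eq_add_neg]
      ring
    have hbot : Tendsto gAux atBot (nhds 0) := key _ tendsto_abs_atBot_atTop
    have htop : Tendsto gAux atTop (nhds 0) := key _ tendsto_abs_atTop_atTop
    simpa using integral_of_hasDerivAt_of_tendsto hderiv hDi hbot htop
  have hP : Integrable (fun x : ℝ => ((15:ℂ)/16) * ((1 : ℂ) + (x : ℂ) ^ 2)⁻¹) := by
    have h0 : Integrable (fun x : ℝ => (((1 + x ^ 2)⁻¹ : ℝ) : ℂ)) :=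
      integrable_inv_one_add_sq.ofReal
    have h := h0.const_mul ((15:ℂ)/16)
    convert h using 2 with x
    push_cast
    ring
  have hfeq : (fun x : ℝ => ((4 + 12 * I * x - 20 * x ^ 2 - 12 * I * x ^ 3) /
      ((x - I) ^ 6 * (x + I) ^ 4) : ℂ))
      = fun x : ℝ => D x - ((15:ℂ)/16) * ((1 : ℂ) + (x : ℂ) ^ 2)⁻¹ := by
    funext x
    rw [fAux_eq x, hD]
  rw [hfeq, integral_sub hDi hP, hDint, integral_const_mul]
  have hI : ∫ x : ℝ, ((1 : ℂ) + (x : ℂ) ^ 2)⁻¹ = (Real.pi : ℂ) := by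
    have e : (fun x : ℝ => ((1 : ℂ) + (x : ℂ) ^ 2)⁻¹)
        = fun x : ℝ => (((1 + x ^ 2)⁻¹ : ℝ) : ℂ) := by
      funext x
      push_cast
      ring
    rw [e]
    rw [show (fun x : ℝ => (((1 + x ^ 2)⁻¹ : ℝ) : ℂ))
        = fun x : ℝ => ((RCLike.ofReal ((1 + x ^ 2)⁻¹) : ℂ)) from rfl]
    rw [integral_ofReal, integral_univ_inv_one_add_sq]
    rfl
  rw [hI]
  ring
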